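/- For an operation f of arity k whose standard rules form a minimal definitional tree T with exempt nodes N1,...,Nn having patterns f t^i_1 ... t^i_k, the replacement rules σi(f x1...xk = t) (for the default rule f x1...xk = t) have left-hand sides that are exhaustive and mutually exclusive over exactly the set of ground f-rooted patterns not matched by any standard rule: every ground f-rooted pattern not matched by a standard rule left-hand side is matched by exactly one replacement rule left-hand side, and no ground pattern matched by a standard rule is matched by a replacement rule. -/

import Mathlib

/-!  A formalization of constructor-based term rewriting with definitional
trees, following Antoy's definitions.  Constructor and operation symbols are
natural numbers (disjoint by construction, since terms distinguish them);
constructors are grouped into types via `ctorType`. -/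

/-- A signature: constructors (with type, arity and argument types) and
operations (with arity, argument types and result type). -/
structure Sig where
  ctorType : ℕ → ℕ
  ctorArity : ℕ → ℕ
  ctorArgTy : ℕ → ℕ → ℕ
  opArity : ℕ → ℕ
  opArgTy : ℕ → ℕ → ℕ
  opResTy : ℕ → ℕ

namespace FLP

/-- Terms: variables (name and type annotation), constructor applications and
operation applications. -/
inductive Tm where
  | var : ℕ → ℕ → Tm
  | con : ℕ → List Tm → Tm
  | op  : ℕ → List Tm → Tm

/-- A substitution maps a variable (name and type) to a term. -/
def Subst := ℕ → ℕ → Tm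

/-- Applying a substitution to a term. -/
def applySubst (σ : Subst) : Tm → Tm
  | .var v ty => σ v ty
  | .con c ts => .con c (ts.attach.map fun t => applySubst σ t.1)
  | .op f ts  => .op f (ts.attach.map fun t => applySubst σ t.1)
decreasing_by
  all_goals (have h := List.sizeOf_lt_of_mem t.2; simp at h ⊢; omega)

/-- The list of variables (name, type) occurring in a term. -/
def varsOf : Tm → List (ℕ × ℕ)
  | .var v ty => [(v, ty)]
  | .con _ ts => ts.attach.flatMap fun t => varsOf t.1
  | .op _ ts  => ts.attach.flatMap fun t => varsOf t.1
decreasing_by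
  all_goals (have h := List.sizeOf_lt_of_mem t.2; simp at h ⊢; omega)

/-- Ground terms: terms without variables. -/
inductive Ground : Tm → Prop
  | con : ∀ c ts, (∀ t ∈ ts, Ground t) → Ground (.con c ts)
  | op  : ∀ f ts, (∀ t ∈ ts, Ground t) → Ground (.op f ts)

/-- Constructor terms: built from variables and constructor symbols only. -/
inductive CTerm : Tm → Prop
  | var : ∀ v ty, CTerm (.var v ty)
  | con : ∀ c ts, (∀ t ∈ ts, CTerm t) → CTerm (.con c ts)

/-- The typing judgment for terms. -/
inductive HasTy (S : Sig) : Tm → ℕ → Prop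
  | var : ∀ v ty, HasTy S (.var v ty) ty
  | con : ∀ c ts, ts.length = S.ctorArity c →
      (∀ i (h : i < ts.length), HasTy S ts[i] (S.ctorArgTy c i)) →
      HasTy S (.con c ts) (S.ctorType c)
  | op : ∀ f ts, ts.length = S.opArity f →
      (∀ i (h : i < ts.length), HasTy S ts[i] (S.opArgTy f i)) →
      HasTy S (.op f ts) (S.opResTy f)

/-- An `f`-rooted pattern: a linear, well-typed term `f t1 ... tn` whose
arguments are constructor terms. -/
def IsPat (S : Sig) (f : ℕ) (p : Tm) : Prop :=
  (∃ ts, p = .op f ts ∧ ∀ t ∈ ts, CTerm t) ∧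
  ((varsOf p).map Prod.fst).Nodup ∧ HasTy S p (S.opResTy f)

/-- A ground `f`-rooted pattern. -/
def IsGroundPat (S : Sig) (f : ℕ) (p : Tm) : Prop :=
  IsPat S f p ∧ Ground p

/-- `q` matches `p` iff `p` is a substitution instance of `q`. -/
def Matches (q p : Tm) : Prop := ∃ σ : Subst, applySubst σ q = p

/-- `q` unifies with `e` iff they have a common instance. -/
def Unifies (q e : Tm) : Prop :=
  ∃ σ τ : Subst, applySubst σ q = applySubst τ e

/-- The substitution replacing the variable named `x` by `t`. -/
def single (x : ℕ) (t : Tm) : Subst := fun v ty =>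
  if v = x then t else .var v ty

/-- The substitution mapping the variables named by `xs` to the corresponding
terms of `ts`. -/
def substOf (xs : List ℕ) (ts : List Tm) : Subst := fun v ty =>
  match xs.findIdx? (· = v) with
  | some i => ts.getD i (.var v ty)
  | none => .var v ty

/-- Partial definitional trees: rule nodes `rule(p = r)`, exempt nodes
`exempt(p)`, and branch nodes storing their pattern, the name of the
inductive variable, and one (constructor, subtree) pair per constructor of
the type of the inductive variable. -/
inductive DTree where
  | rule : Tm → Tm → DTree
  | exempt : Tm → DTree
  | branch : Tm → ℕ → List (ℕ × DTree) → DTree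

/-- The pattern of the root node of a partial definitional tree. -/
def DTree.pat : DTree → Tm
  | .rule p _ => p
  | .exempt p => p
  | .branch p _ _ => p

/-- The patterns of the leaves of a partial definitional tree. -/
def DTree.leafPats : DTree → List Tm
  | .rule p _ => [p]
  | .exempt p => [p]
  | .branch _ _ cs => cs.attach.flatMap fun ct => ct.1.2.leafPats
decreasing_by
  all_goals (obtain ⟨⟨c', T'⟩, hm⟩ := ct;
             have h := List.sizeOf_lt_of_mem hm; simp at h ⊢; omega)

/-- The patterns (left-hand sides) of the rule nodes. -/
def DTree.rulePats : DTree → List Tm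
  | .rule p _ => [p]
  | .exempt _ => []
  | .branch _ _ cs => cs.attach.flatMap fun ct => ct.1.2.rulePats
decreasing_by
  all_goals (obtain ⟨⟨c', T'⟩, hm⟩ := ct;
             have h := List.sizeOf_lt_of_mem hm; simp at h ⊢; omega)

/-- The patterns of the exempt nodes. -/
def DTree.exemptPats : DTree → List Tm
  | .rule _ _ => []
  | .exempt p => [p]
  | .branch _ _ cs => cs.attach.flatMap fun ct => ct.1.2.exemptPats
decreasing_by
  all_goals (obtain ⟨⟨c', T'⟩, hm⟩ := ct;
             have h := List.sizeOf_lt_of_mem hm; simp at h ⊢; omega)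

/-- The rules contained in the rule nodes. -/
def DTree.rules : DTree → List (Tm × Tm)
  | .rule p r => [(p, r)]
  | .exempt _ => []
  | .branch _ _ cs => cs.attach.flatMap fun ct => ct.1.2.rules
decreasing_by
  all_goals (obtain ⟨⟨c', T'⟩, hm⟩ := ct;
             have h := List.sizeOf_lt_of_mem hm; simp at h ⊢; omega)

/-- Well-formed partial definitional trees w.r.t. a signature: at a branch
node with pattern `p` and inductive variable `x` (of type `ty`, occurring in
`p`), there is exactly one child per constructor `c` of type `ty`, whose
pattern is obtained from `p` by substituting `x` with `c` applied to fresh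
pairwise distinct variables. -/
inductive WF (S : Sig) : DTree → Prop
  | rule : ∀ p r, WF S (.rule p r)
  | exempt : ∀ p, WF S (.exempt p)
  | branch : ∀ p x ty (cs : List (ℕ × DTree)),
      (x, ty) ∈ varsOf p →
      (cs.map Prod.fst).Nodup →
      (∀ c, c ∈ cs.map Prod.fst ↔ S.ctorType c = ty) →
      (∀ ct ∈ cs, ∃ fresh : List (ℕ × ℕ),
          (fresh.map Prod.fst).Nodup ∧
          fresh.length = S.ctorArity ct.1 ∧
          (∀ i (h : i < fresh.length), fresh[i].2 = S.ctorArgTy ct.1 i) ∧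
          (∀ v ∈ fresh, v.1 ∉ (varsOf p).map Prod.fst) ∧
          (Prod.snd ct).pat =
            applySubst (single x (.con ct.1 (fresh.map fun v => Tm.var v.1 v.2))) p) →
      (∀ ct ∈ cs, WF S (Prod.snd ct)) →
      WF S (.branch p x cs)

/-- A definitional tree of the operation `f`: a well-formed partial
definitional tree whose root pattern is `f x1 ... xn` with pairwise distinct
(appropriately typed) variables. -/
def IsDTreeOf (S : Sig) (f : ℕ) (T : DTree) : Prop :=
  WF S T ∧
  ∃ xs : List (ℕ × ℕ),
    (xs.map Prod.fst).Nodup ∧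
    xs.length = S.opArity f ∧
    (∀ i (h : i < xs.length), xs[i].2 = S.opArgTy f i) ∧
    T.pat = .op f (xs.map fun v => Tm.var v.1 v.2)

/-- `Subtree N T` : `N` is a node (subtree) of `T`. -/
inductive Subtree : DTree → DTree → Prop
  | refl : ∀ T, Subtree T T
  | branch : ∀ p x cs ct N, ct ∈ cs → Subtree N (Prod.snd ct) →
      Subtree N (.branch p x cs)

/-- A tree has a rule node (somewhere, including its root). -/
inductive HasRule : DTree → Prop
  | rule : ∀ p r, HasRule (.rule p r)
  | branch : ∀ p x cs ct, ct ∈ cs → HasRule (Prod.snd ct) →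
      HasRule (.branch p x cs)

/-- A definitional tree is minimal iff there is some rule node below any
branch node of the tree. -/
def Minimal (T : DTree) : Prop :=
  ∀ p x cs, Subtree (.branch p x cs) T → HasRule (.branch p x cs)



-- scratch lemmas
theorem Tm.ind (motive : Tm → Prop)
    (hvar : ∀ v ty, motive (.var v ty))
    (hcon : ∀ c ts, (∀ t ∈ ts, motive t) → motive (.con c ts))
    (hop : ∀ f ts, (∀ t ∈ ts, motive t) → motive (.op f ts)) :
    ∀ t, motive t
  | .var v ty => hvar v ty
  | .con c ts => hcon c ts (fun t ht => Tm.ind motive hvar hcon hop t)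
  | .op f ts => hop f ts (fun t ht => Tm.ind motive hvar hcon hop t)
decreasing_by
  all_goals (have h := List.sizeOf_lt_of_mem ht; simp at h ⊢; omega)

theorem DTree.ind (motive : DTree → Prop)
    (hrule : ∀ p r, motive (.rule p r))
    (hex : ∀ p, motive (.exempt p))
    (hbr : ∀ p x cs, (∀ ct ∈ cs, motive (Prod.snd ct)) → motive (.branch p x cs)) :
    ∀ T, motive T
  | .rule p r => hrule p r
  | .exempt p => hex p
  | .branch p x cs => hbr p x cs (fun ct hct => DTree.ind motive hrule hex hbr ct.2)
decreasing_by
  all_goals (obtain ⟨c', T'⟩ := ct;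
             have h := List.sizeOf_lt_of_mem hct; simp at h ⊢; omega)

@[simp] theorem applySubst_var (σ : Subst) (v ty) : applySubst σ (.var v ty) = σ v ty := by
  simp [applySubst]

@[simp] theorem applySubst_con (σ : Subst) (c ts) :
    applySubst σ (.con c ts) = .con c (ts.map (applySubst σ)) := by
  rw [applySubst]; congr 1; simp [List.attach_map_val]

@[simp] theorem applySubst_op (σ : Subst) (f ts) :
    applySubst σ (.op f ts) = .op f (ts.map (applySubst σ)) := by
  rw [applySubst]; congr 1; simp [List.attach_map_val]

theorem flatMap_attach' {α β : Type*} (l : List α) (g : α → List β) :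
    l.attach.flatMap (fun t => g t.1) = l.flatMap g := by
  induction l with
  | nil => simp
  | cons a l ih =>
    rw [List.attach_cons, List.flatMap_cons, List.flatMap_cons, List.flatMap_map]
    simp only []
    rw [show (fun t : {x // x ∈ l} => g t.1) = (fun t => g t.1) from rfl] at ih
    rw [ih]

@[simp] theorem varsOf_var (v ty) : varsOf (.var v ty) = [(v, ty)] := by simp [varsOf]

@[simp] theorem varsOf_con (c ts) : varsOf (.con c ts) = ts.flatMap varsOf := by
  rw [varsOf]; simp [flatMap_attach']

@[simp] theorem varsOf_op (f ts) : varsOf (.op f ts) = ts.flatMap varsOf := by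
  rw [varsOf]; simp [flatMap_attach']

@[simp] theorem leafPats_rule (p r) : (DTree.rule p r).leafPats = [p] := by simp [DTree.leafPats]
@[simp] theorem leafPats_exempt (p) : (DTree.exempt p).leafPats = [p] := by simp [DTree.leafPats]
@[simp] theorem leafPats_branch (p x cs) :
    (DTree.branch p x cs).leafPats = cs.flatMap (fun ct => ct.2.leafPats) := by
  rw [DTree.leafPats]; exact flatMap_attach' cs (fun ct => ct.2.leafPats)
@[simp] theorem rulePats_rule (p r) : (DTree.rule p r).rulePats = [p] := by simp [DTree.rulePats]
@[simp] theorem rulePats_exempt (p) : (DTree.exempt p).rulePats = [] := by simp [DTree.rulePats]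
@[simp] theorem rulePats_branch (p x cs) :
    (DTree.branch p x cs).rulePats = cs.flatMap (fun ct => ct.2.rulePats) := by
  rw [DTree.rulePats]; exact flatMap_attach' cs (fun ct => ct.2.rulePats)
@[simp] theorem exemptPats_rule (p r) : (DTree.rule p r).exemptPats = [] := by simp [DTree.exemptPats]
@[simp] theorem exemptPats_exempt (p) : (DTree.exempt p).exemptPats = [p] := by simp [DTree.exemptPats]
@[simp] theorem exemptPats_branch (p x cs) :
    (DTree.branch p x cs).exemptPats = cs.flatMap (fun ct => ct.2.exemptPats) := by
  rw [DTree.exemptPats]; exact flatMap_attach' cs (fun ct => ct.2.exemptPats)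

theorem rulePats_subset_leafPats : ∀ T : DTree, ∀ l ∈ T.rulePats, l ∈ T.leafPats := by
  refine DTree.ind _ ?_ ?_ ?_ <;> intros <;> simp_all [List.mem_flatMap]
  · obtain ⟨ct, h1, h2⟩ := ‹∃ _, _›
    exact ⟨ct, h1, by aesop⟩

theorem exemptPats_subset_leafPats : ∀ T : DTree, ∀ l ∈ T.exemptPats, l ∈ T.leafPats := by
  refine DTree.ind _ ?_ ?_ ?_ <;> intros <;> simp_all [List.mem_flatMap]
  · obtain ⟨ct, h1, h2⟩ := ‹∃ _, _›
    exact ⟨ct, h1, by aesop⟩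

/-- composition of substitutions under application -/
theorem applySubst_applySubst (σ τ : Subst) :
    ∀ q, applySubst τ (applySubst σ q) = applySubst (fun v ty => applySubst τ (σ v ty)) q := by
  refine Tm.ind _ ?_ ?_ ?_
  · intro v ty; rw [applySubst_var]; exact (applySubst_var (fun v ty => applySubst τ (σ v ty)) v ty).symm
  · intro c ts ih
    rw [applySubst_con, applySubst_con, List.map_map]
    refine Eq.trans ?_ (applySubst_con _ c ts).symm
    exact congrArg _ (List.map_congr_left ih)
  · intro c ts ih
    rw [applySubst_op, applySubst_op, List.map_map]
    refine Eq.trans ?_ (applySubst_op _ c ts).symm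
    exact congrArg _ (List.map_congr_left ih)

/-- pointwise-equal-on-vars substitutions agree -/
theorem applySubst_congr {σ τ : Subst} :
    ∀ q, (∀ v ∈ varsOf q, σ v.1 v.2 = τ v.1 v.2) → applySubst σ q = applySubst τ q := by
  refine Tm.ind _ ?_ ?_ ?_ <;> intro a ts
  · intro h; simpa using h (a, ts) (by simp)
  all_goals
    intro ih h
    simp only [applySubst_con, applySubst_op]
    congr 1
    refine List.map_congr_left fun t ht => ih t ht fun v hv => h v ?_
    simp [List.mem_flatMap]; exact ⟨t, ht, hv⟩

/-- matching substitutions agree on variables -/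
theorem match_vars_eq {σ τ : Subst} :
    ∀ q, applySubst σ q = applySubst τ q → ∀ v ∈ varsOf q, σ v.1 v.2 = τ v.1 v.2 := by
  refine Tm.ind _ ?_ ?_ ?_ <;> intro a ts
  · intro h v hv; simp at hv h; subst hv; exact h
  all_goals
    intro ih h v hv
    simp only [applySubst_con, applySubst_op, Tm.con.injEq, Tm.op.injEq] at h
    simp only [varsOf_con, varsOf_op, List.mem_flatMap] at hv
    obtain ⟨t, ht, hv⟩ := hv
    exact ih t ht (List.map_inj_left.mp h.2 t ht) v hv

theorem ground_of_match {σ : Subst} :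
    ∀ q, Ground (applySubst σ q) → ∀ v ∈ varsOf q, Ground (σ v.1 v.2) := by
  refine Tm.ind _ ?_ ?_ ?_ <;> intro a ts
  · intro h v hv; simp at hv; subst hv; simpa using h
  · intro ih h v hv
    simp only [varsOf_con, List.mem_flatMap] at hv
    obtain ⟨t, ht, hv⟩ := hv
    refine ih t ht ?_ v hv
    simp only [applySubst_con] at h
    cases h with
    | con _ _ hg => exact hg _ (List.mem_map_of_mem ht)
  · intro ih h v hv
    simp only [varsOf_op, List.mem_flatMap] at hv
    obtain ⟨t, ht, hv⟩ := hv
    refine ih t ht ?_ v hv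
    simp only [applySubst_op] at h
    cases h with
    | op _ _ hg => exact hg _ (List.mem_map_of_mem ht)

theorem cterm_of_match {σ : Subst} :
    ∀ q, CTerm (applySubst σ q) → ∀ v ∈ varsOf q, CTerm (σ v.1 v.2) := by
  refine Tm.ind _ ?_ ?_ ?_ <;> intro a ts
  · intro h v hv; simp at hv; subst hv; simpa using h
  · intro ih h v hv
    simp only [varsOf_con, List.mem_flatMap] at hv
    obtain ⟨t, ht, hv⟩ := hv
    refine ih t ht ?_ v hv
    simp only [applySubst_con] at h
    cases h with
    | con _ _ hg => exact hg _ (List.mem_map_of_mem ht)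
  · intro ih h v hv
    simp only [applySubst_op] at h
    cases h

theorem hasTy_con_inv {S : Sig} {c ls τ} (h : HasTy S (.con c ls) τ) :
    τ = S.ctorType c ∧ ls.length = S.ctorArity c ∧
    ∀ i (hi : i < ls.length), HasTy S ls[i] (S.ctorArgTy c i) := by
  cases h with | con _ _ h1 h2 => exact ⟨rfl, h1, h2⟩

theorem hasTy_op_inv {S : Sig} {g ls τ} (h : HasTy S (.op g ls) τ) :
    τ = S.opResTy g ∧ ls.length = S.opArity g ∧
    ∀ i (hi : i < ls.length), HasTy S ls[i] (S.opArgTy g i) := by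
  cases h with | op _ _ h1 h2 => exact ⟨rfl, h1, h2⟩

theorem hasTy_of_match {S : Sig} {σ : Subst} :
    ∀ q {τ}, HasTy S q τ → HasTy S (applySubst σ q) τ →
      ∀ v ∈ varsOf q, HasTy S (σ v.1 v.2) v.2 := by
  refine Tm.ind _ ?_ ?_ ?_ <;> intro a ts
  · intro τ hq hσ v hv
    simp at hv; subst hv
    cases hq; simpa using hσ
  · intro ih τ hq hσ v hv
    simp only [varsOf_con, List.mem_flatMap] at hv
    obtain ⟨t, ht, hv⟩ := hv
    simp only [applySubst_con] at hσ
    obtain ⟨-, hl, hty⟩ := hasTy_con_inv hσ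
    obtain ⟨-, hl', hty'⟩ := hasTy_con_inv hq
    obtain ⟨i, hi, rfl⟩ := List.getElem_of_mem ht
    refine ih _ ht (hty' i hi) ?_ v hv
    have := hty i (by simpa using hi)
    simpa using this
  · intro ih τ hq hσ v hv
    simp only [varsOf_op, List.mem_flatMap] at hv
    obtain ⟨t, ht, hv⟩ := hv
    simp only [applySubst_op] at hσ
    obtain ⟨-, hl, hty⟩ := hasTy_op_inv hσ
    obtain ⟨-, hl', hty'⟩ := hasTy_op_inv hq
    obtain ⟨i, hi, rfl⟩ := List.getElem_of_mem ht
    refine ih _ ht (hty' i hi) ?_ v hv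
    have := hty i (by simpa using hi)
    simpa using this

theorem subst_hasTy {S : Sig} {σ : Subst} :
    ∀ q {τ}, HasTy S q τ → (∀ v ∈ varsOf q, HasTy S (σ v.1 v.2) v.2) →
      HasTy S (applySubst σ q) τ := by
  refine Tm.ind _ ?_ ?_ ?_ <;> intro a ts
  · intro τ hq hv
    cases hq; simpa using hv (a, ts) (by simp)
  · intro ih τ hq hv
    obtain ⟨rfl, hl, hty⟩ := hasTy_con_inv hq
    simp only [applySubst_con]
    refine HasTy.con _ _ (by simpa using hl) ?_
    intro i hi
    simp only [List.length_map] at hi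
    simp only [List.getElem_map]
    refine ih _ (ts.getElem_mem hi) (hty i hi) ?_
    intro v hvv
    exact hv v (by simp [List.mem_flatMap]; exact ⟨_, ts.getElem_mem hi, hvv⟩)
  · intro ih τ hq hv
    obtain ⟨rfl, hl, hty⟩ := hasTy_op_inv hq
    simp only [applySubst_op]
    refine HasTy.op _ _ (by simpa using hl) ?_
    intro i hi
    simp only [List.length_map] at hi
    simp only [List.getElem_map]
    refine ih _ (ts.getElem_mem hi) (hty i hi) ?_
    intro v hvv
    exact hv v (by simp [List.mem_flatMap]; exact ⟨_, ts.getElem_mem hi, hvv⟩)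

theorem varsOf_applySubst (σ : Subst) :
    ∀ q, varsOf (applySubst σ q) = (varsOf q).flatMap (fun v => varsOf (σ v.1 v.2)) := by
  refine Tm.ind _ ?_ ?_ ?_ <;> intro a ts
  · simp
  all_goals
    intro ih
    simp only [applySubst_con, applySubst_op, varsOf_con, varsOf_op, List.flatMap_map,
      List.flatMap_assoc]
    induction ts with
    | nil => simp
    | cons t ts ihts =>
      simp only [List.flatMap_cons]
      rw [ih t (by simp), ihts (fun t ht => ih t (by simp [ht]))]

theorem cterm_subst {σ : Subst} :
    ∀ q, CTerm q → (∀ v ∈ varsOf q, CTerm (σ v.1 v.2)) → CTerm (applySubst σ q) := by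
  refine Tm.ind _ ?_ ?_ ?_ <;> intro a ts
  · intro _ h; simpa using h (a, ts) (by simp)
  · intro ih hq hv
    simp only [applySubst_con]
    cases hq with
    | con _ _ hts =>
      refine CTerm.con _ _ ?_
      intro t ht
      simp only [List.mem_map] at ht
      obtain ⟨u, hu, rfl⟩ := ht
      exact ih u hu (hts u hu) fun v hvv =>
        hv v (by simp [List.mem_flatMap]; exact ⟨u, hu, hvv⟩)
  · intro _ hq _; cases hq

theorem ground_subst {σ : Subst} :
    ∀ q, (∀ v ∈ varsOf q, Ground (σ v.1 v.2)) → Ground (applySubst σ q) := by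
  refine Tm.ind _ ?_ ?_ ?_ <;> intro a ts
  · intro h; simpa using h (a, ts) (by simp)
  · intro ih hv
    simp only [applySubst_con]
    refine Ground.con _ _ fun t ht => ?_
    simp only [List.mem_map] at ht
    obtain ⟨u, hu, rfl⟩ := ht
    exact ih u hu fun v hvv => hv v (by simp [List.mem_flatMap]; exact ⟨u, hu, hvv⟩)
  · intro ih hv
    simp only [applySubst_op]
    refine Ground.op _ _ fun t ht => ?_
    simp only [List.mem_map] at ht
    obtain ⟨u, hu, rfl⟩ := ht
    exact ih u hu fun v hvv => hv v (by simp [List.mem_flatMap]; exact ⟨u, hu, hvv⟩)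

/-- classification of ground constructor terms -/
theorem ground_cterm_classify {S : Sig} {t ty} (hg : Ground t) (hc : CTerm t)
    (hty : HasTy S t ty) :
    ∃ c us, t = .con c us ∧ S.ctorType c = ty ∧ us.length = S.ctorArity c ∧
      (∀ u ∈ us, Ground u ∧ CTerm u) ∧
      (∀ i (hi : i < us.length), HasTy S us[i] (S.ctorArgTy c i)) := by
  cases t with
  | var v tv => cases hg
  | op g us => cases hc
  | con c us =>
    obtain ⟨rfl, h1, h2⟩ := hasTy_con_inv hty
    cases hg with | con _ _ hgs =>
    cases hc with | con _ _ hcs =>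
    exact ⟨c, us, rfl, rfl, h1, fun u hu => ⟨hgs u hu, hcs u hu⟩, h2⟩

/-- nodup names: same name implies same var -/
theorem eq_of_nodup_names {L : List (ℕ × ℕ)} (hnd : (L.map Prod.fst).Nodup)
    {a b : ℕ × ℕ} (ha : a ∈ L) (hb : b ∈ L) (hfst : a.1 = b.1) : a = b := by
  exact List.inj_on_of_nodup_map hnd ha hb hfst

theorem Matches.trans {a b c : Tm} (h1 : Matches a b) (h2 : Matches b c) : Matches a c := by
  obtain ⟨σ, rfl⟩ := h1
  obtain ⟨τ, rfl⟩ := h2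
  exact ⟨_, (applySubst_applySubst σ τ a).symm⟩

@[simp] theorem applySubst_id : ∀ q, applySubst (fun v ty => .var v ty) q = q := by
  refine Tm.ind _ ?_ ?_ ?_
  · intro v ty; exact applySubst_var _ _ _
  · intro c ts ih; refine (applySubst_con _ c ts).trans ?_; exact congrArg _ (by rw [List.map_congr_left ih]; simp)
  · intro c ts ih; refine (applySubst_op _ c ts).trans ?_; exact congrArg _ (by rw [List.map_congr_left ih]; simp)

theorem Matches.refl (a : Tm) : Matches a a := ⟨_, applySubst_id a⟩

theorem wf_inv_branch {S : Sig} {p x cs} (h : WF S (.branch p x cs)) :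
    (∃ ty, (x, ty) ∈ varsOf p ∧
      (∀ c, c ∈ cs.map Prod.fst ↔ S.ctorType c = ty)) ∧
    (cs.map Prod.fst).Nodup ∧
    (∀ ct ∈ cs, ∃ fresh : List (ℕ × ℕ),
        (fresh.map Prod.fst).Nodup ∧
        fresh.length = S.ctorArity ct.1 ∧
        (∀ i (h : i < fresh.length), fresh[i].2 = S.ctorArgTy ct.1 i) ∧
        (∀ v ∈ fresh, v.1 ∉ (varsOf p).map Prod.fst) ∧
        (Prod.snd ct).pat =
          applySubst (single x (.con ct.1 (fresh.map fun v => Tm.var v.1 v.2))) p) ∧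
    (∀ ct ∈ cs, WF S (Prod.snd ct)) := by
  cases h with
  | branch p x ty cs h1 h2 h3 h4 h5 => exact ⟨⟨ty, h1, h3⟩, h2, h4, h5⟩

/-- every leaf pattern is an instance of the node pattern -/
theorem matches_leafPat {S : Sig} : ∀ T, WF S T → ∀ l ∈ T.leafPats, Matches T.pat l := by
  refine DTree.ind _ ?_ ?_ ?_
  · intro p r _ l hl
    simp [DTree.pat] at hl; subst hl; exact Matches.refl _
  · intro p _ l hl
    simp [DTree.pat] at hl; subst hl; exact Matches.refl _
  · intro p x cs ih hwf l hl
    obtain ⟨_, _, hfr, hwfs⟩ := wf_inv_branch hwf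
    simp only [leafPats_branch, List.mem_flatMap] at hl
    obtain ⟨ct, hct, hl⟩ := hl
    have h1 : Matches (DTree.branch p x cs).pat ct.2.pat := by
      obtain ⟨fresh, -, -, -, -, hpat⟩ := hfr ct hct
      exact ⟨_, hpat.symm⟩
    exact h1.trans (ih ct hct (hwfs ct hct) l hl)

@[simp] theorem single_same (x : ℕ) (t : Tm) (ty : ℕ) : single x t x ty = t := by
  simp [single]

theorem single_ne {v x : ℕ} (h : v ≠ x) (t : Tm) (ty : ℕ) : single x t v ty = .var v ty := by
  simp [single, h]

@[simp] theorem varsOf_conVars (c : ℕ) (fresh : List (ℕ × ℕ)) :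
    varsOf (Tm.con c (fresh.map fun w => Tm.var w.1 w.2)) = fresh := by
  simp only [varsOf_con, List.flatMap_map]
  induction fresh with
  | nil => simp
  | cons a l ih => simp [ih]

/-- nodup of the names after the branch substitution -/
theorem nodup_subst_names {x : ℕ} {fresh : List (ℕ × ℕ)}
    (hfnd : (fresh.map Prod.fst).Nodup) :
    ∀ (L : List (ℕ × ℕ)), (L.map Prod.fst).Nodup →
    (∀ v ∈ fresh, v.1 ∉ L.map Prod.fst) →
    ((L.flatMap fun v => if v.1 = x then fresh else [v]).map Prod.fst).Nodup := by
  intro L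
  induction L with
  | nil => simp
  | cons a L ih =>
    intro hnd hdisj
    simp only [List.map_cons, List.nodup_cons, List.mem_map] at hnd
    simp only [List.flatMap_cons, List.map_append, List.nodup_append]
    refine ⟨?_, ih hnd.2 (fun v hv => by
        have := hdisj v hv; simp only [List.map_cons, List.mem_cons] at this; tauto), ?_⟩
    · by_cases hax : a.1 = x
      · rw [if_pos hax]; exact hfnd
      · rw [if_neg hax]; simp
    · intro b hb b' hb' hbb
      subst hbb
      simp only [List.mem_map, List.mem_flatMap] at hb'
      obtain ⟨w, ⟨u, huL, hw⟩, rfl⟩ := hb'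
      by_cases hax : a.1 = x
      · rw [if_pos hax] at hb
        simp only [List.mem_map] at hb
        obtain ⟨w', hw', hww⟩ := hb
        by_cases hux : u.1 = x
        · exact hnd.1 ⟨u, huL, by rw [hux, hax]⟩
        · rw [if_neg hux] at hw
          simp only [List.mem_singleton] at hw
          subst hw
          refine hdisj w' hw' ?_
          rw [hww]
          exact List.mem_map_of_mem (List.mem_cons_of_mem a huL)
      · rw [if_neg hax] at hb
        simp only [List.map_cons, List.map_nil, List.mem_singleton] at hb
        by_cases hux : u.1 = x
        · rw [if_pos hux] at hw
          refine hdisj w hw ?_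
          rw [hb]; simp
        · rw [if_neg hux] at hw
          simp only [List.mem_singleton] at hw
          exact hnd.1 ⟨u, huL, by rw [← hw]; exact hb⟩

theorem child_pat_isPat {S : Sig} {f : ℕ} {p0 : Tm} (hp0 : IsPat S f p0)
    {x ty c : ℕ} (hx : (x, ty) ∈ varsOf p0) (hcty : S.ctorType c = ty)
    {fresh : List (ℕ × ℕ)}
    (hfnd : (fresh.map Prod.fst).Nodup)
    (hflen : fresh.length = S.ctorArity c)
    (hfty : ∀ i (h : i < fresh.length), fresh[i].2 = S.ctorArgTy c i)
    (hdisj : ∀ v ∈ fresh, v.1 ∉ (varsOf p0).map Prod.fst) :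
    IsPat S f (applySubst (single x (.con c (fresh.map fun v => Tm.var v.1 v.2))) p0) := by
  obtain ⟨⟨ts, rfl, hcts⟩, hnd, hty⟩ := hp0
  have hσct : HasTy S (Tm.con c (fresh.map fun v => Tm.var v.1 v.2)) ty := by
    rw [← hcty]
    refine HasTy.con _ _ (by simpa using hflen) ?_
    intro i hi
    simp only [List.length_map] at hi
    simp only [List.getElem_map]
    have := hfty i hi
    rw [← this]
    exact HasTy.var _ _
  refine ⟨⟨ts.map (applySubst (single x (.con c (fresh.map fun v => Tm.var v.1 v.2)))),
      by simp, ?_⟩, ?_, ?_⟩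
  · intro t ht
    simp only [List.mem_map] at ht
    obtain ⟨u, hu, rfl⟩ := ht
    refine cterm_subst u (hcts u hu) ?_
    intro v hv
    simp only [single]
    by_cases hvx : v.1 = x
    · rw [if_pos hvx]
      refine CTerm.con _ _ fun t ht => ?_
      simp only [List.mem_map] at ht
      obtain ⟨w, -, rfl⟩ := ht
      exact CTerm.var _ _
    · rw [if_neg hvx]
      exact CTerm.var _ _
  · rw [varsOf_applySubst]
    have heq : ((varsOf (Tm.op f ts)).flatMap
          fun v => varsOf (single x (.con c (fresh.map fun w => Tm.var w.1 w.2)) v.1 v.2)) =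
        (varsOf (Tm.op f ts)).flatMap fun v => if v.1 = x then fresh else [v] := by
      refine List.flatMap_congr fun v hv => ?_
      simp only [single]
      by_cases hvx : v.1 = x
      · rw [if_pos hvx, if_pos hvx, varsOf_conVars]
      · rw [if_neg hvx, if_neg hvx, varsOf_var]
    rw [heq]
    exact nodup_subst_names hfnd _ hnd hdisj
  · refine subst_hasTy _ hty ?_
    intro v hv
    simp only [single]
    by_cases hvx : v.1 = x
    · have hveq : v = (x, ty) := eq_of_nodup_names hnd hv hx (by simp [hvx])
      rw [if_pos hvx, show v.2 = ty by rw [hveq]]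
      exact hσct
    · rw [if_neg hvx]
      exact HasTy.var _ _

theorem findIdx?_nodup {L : List ℕ} (h : L.Nodup) :
    ∀ {i}, (hi : i < L.length) → L.findIdx? (· = L[i]) = some i := by
  induction L with
  | nil => intro i hi; simp at hi
  | cons a L ih =>
    intro i hi
    match i with
    | 0 => simp [List.findIdx?_cons]
    | j + 1 =>
      have hj : j < L.length := by simpa using hi
      have hne : ¬(a = L[j]) := fun he => (List.nodup_cons.mp h).1 (he ▸ L.getElem_mem hj)
      simp only [List.getElem_cons_succ, List.findIdx?_cons]
      rw [if_neg (by simpa using hne),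
        ih (List.nodup_cons.mp h).2 hj]
      rfl

theorem uniq {S : Sig} {f : ℕ} :
    ∀ T, WF S T → IsPat S f T.pat → ∀ p, IsGroundPat S f p → Matches T.pat p →
    ((∃ l ∈ T.rulePats, Matches l p) ∨ (∃ l ∈ T.exemptPats, Matches l p)) ∧
    ¬((∃ l ∈ T.rulePats, Matches l p) ∧ (∃ l ∈ T.exemptPats, Matches l p)) ∧
    (∀ l1 ∈ T.exemptPats, ∀ l2 ∈ T.exemptPats, Matches l1 p → Matches l2 p → l1 = l2) := by
  refine DTree.ind _ ?_ ?_ ?_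
  · intro q r _ _ p _ hm
    simp only [DTree.pat] at hm
    refine ⟨Or.inl ⟨q, by simp, hm⟩, by simp, by simp⟩
  · intro q _ _ p _ hm
    simp only [DTree.pat] at hm
    refine ⟨Or.inr ⟨q, by simp, hm⟩, by simp, ?_⟩
    simp only [exemptPats_exempt, List.mem_singleton]
    rintro l1 rfl l2 rfl _ _; rfl
  · intro p0 x cs ih hwf hpat p hgp hm
    obtain ⟨⟨ty, hxv, hcty⟩, hcsnd, hfr, hwfs⟩ := wf_inv_branch hwf
    simp only [DTree.pat] at hm hpat
    obtain ⟨θ, hθ⟩ := hm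
    -- facts about θ x ty
    have hground : Ground (θ x ty) := by
      have := ground_of_match p0 (hθ ▸ hgp.2) (x, ty) hxv
      simpa using this
    have hhasty : HasTy S (θ x ty) ty := by
      have := hasTy_of_match p0 hpat.2.2 (hθ ▸ hgp.1.2.2) (x, ty) hxv
      simpa using this
    have hcterm : CTerm (θ x ty) := by
      obtain ⟨⟨ts, hp0eq, hcts0⟩, hnd0, hty0⟩ := hpat
      obtain ⟨⟨us0, hpeq, hctsp⟩, -, -⟩ := hgp.1
      subst hp0eq
      simp only [varsOf_op, List.mem_flatMap] at hxv
      obtain ⟨t, htts, hxt⟩ := hxv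
      have hsub : applySubst θ t ∈ us0 := by
        rw [hpeq] at hθ
        simp only [applySubst_op, Tm.op.injEq] at hθ
        exact hθ.2 ▸ List.mem_map_of_mem htts
      have := cterm_of_match t (hctsp _ hsub) (x, ty) hxt
      simpa using this
    obtain ⟨c, us, hθx, hctyc, huslen, husgc, husty⟩ :=
      ground_cterm_classify hground hcterm hhasty
    have hcmem : c ∈ cs.map Prod.fst := (hcty c).mpr hctyc
    obtain ⟨ct, hct, hctfst⟩ := List.mem_map.mp hcmem
    obtain ⟨fresh, hfnd, hflen, hfty, hfdisj, hcpat⟩ := hfr ct hct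
    rw [hctfst] at hcpat hflen hfty
    have hfus : fresh.length = us.length := by rw [hflen, huslen]
    -- the matching substitution for the child
    set θ' : Subst := fun v tv =>
      match (fresh.map Prod.fst).findIdx? (· = v) with
      | some i => us.getD i (Tm.var v tv)
      | none => θ v tv with hθ'def
    have keyA : ∀ i (hi : i < fresh.length), θ' fresh[i].1 fresh[i].2 = us[i]'(hfus ▸ hi) := by
      intro i hi
      have h1 : (fresh.map Prod.fst).findIdx? (· = fresh[i].1) = some i := by
        have := findIdx?_nodup hfnd (i := i) (by simpa using hi)
        simpa using this
      rw [hθ'def]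
      simp only [h1]
      simp [List.getD_eq_getElem?_getD, List.getElem?_eq_getElem (hfus ▸ hi)]
    have keyC : ∀ v : ℕ × ℕ, v.1 ∉ fresh.map Prod.fst → θ' v.1 v.2 = θ v.1 v.2 := by
      intro v hv
      have : (fresh.map Prod.fst).findIdx? (· = v.1) = none := by
        rw [List.findIdx?_eq_none_iff]
        intro a ha
        by_contra hcon
        simp only [Bool.not_eq_false, decide_eq_true_eq] at hcon
        exact hv (hcon ▸ ha)
      rw [hθ'def]
      simp only [this]
    have keyB : applySubst θ' (Tm.con c (fresh.map fun w => Tm.var w.1 w.2)) = Tm.con c us := by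
      simp only [applySubst_con, List.map_map]
      congr 1
      refine List.ext_getElem (by simpa using hfus) ?_
      intro i h1 h2
      simp only [List.getElem_map, Function.comp, applySubst_var]
      exact keyA i (by simpa using h1)
    have keyD : applySubst θ' ct.2.pat = p := by
      rw [hcpat, applySubst_applySubst, ← hθ]
      refine applySubst_congr _ ?_
      intro v hv
      by_cases hvx : v.1 = x
      · have hveq : v = (x, ty) := eq_of_nodup_names hpat.2.1 hv hxv (by simpa using hvx)
        rw [hveq]
        simp only [single_same]
        rw [keyB, ← hθx]
      · rw [single_ne hvx]
        simp only [applySubst_var]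
        refine keyC v ?_
        intro hmem
        simp only [List.mem_map] at hmem
        obtain ⟨w, hw, hww⟩ := hmem
        exact hfdisj w hw (hww ▸ List.mem_map_of_mem hv)
    have keyE : ∀ ct' ∈ cs, ct'.1 ≠ c → ¬ Matches ct'.2.pat p := by
      rintro ct' hct' hne ⟨ρ, hρ⟩
      obtain ⟨fresh', _, _, _, _, hcpat'⟩ := hfr ct' hct'
      rw [hcpat', applySubst_applySubst] at hρ
      have := match_vars_eq p0 (hρ.trans hθ.symm) (x, ty) hxv
      simp only [single_same] at this
      rw [hθx] at this
      simp only [applySubst_con, Tm.con.injEq] at this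
      exact hne this.1
    have keyF : ∀ ct' ∈ cs, ∀ l ∈ ct'.2.leafPats, Matches l p → ct' = ct := by
      intro ct' hct' l hl hml
      by_cases hne : ct'.1 = c
      · exact List.inj_on_of_nodup_map hcsnd hct' hct (by rw [hne, hctfst])
      · exact absurd ((matches_leafPat ct'.2 (hwfs ct' hct') l hl).trans hml) (keyE ct' hct' hne)
    have hcIsPat : IsPat S f ct.2.pat := by
      rw [hcpat]
      exact child_pat_isPat hpat hxv hctyc hfnd hflen hfty hfdisj
    obtain ⟨ihex, ihmut, ihuni⟩ := ih ct hct (hwfs ct hct) hcIsPat p hgp ⟨θ', keyD⟩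
    simp only [rulePats_branch, exemptPats_branch, List.mem_flatMap]
    refine ⟨?_, ?_, ?_⟩
    · rcases ihex with ⟨l, hl, hml⟩ | ⟨l, hl, hml⟩
      · exact Or.inl ⟨l, ⟨ct, hct, hl⟩, hml⟩
      · exact Or.inr ⟨l, ⟨ct, hct, hl⟩, hml⟩
    · rintro ⟨⟨l1, ⟨ct1, hct1, hl1⟩, hm1⟩, ⟨l2, ⟨ct2, hct2, hl2⟩, hm2⟩⟩
      have e1 := keyF ct1 hct1 l1 (rulePats_subset_leafPats ct1.2 l1 hl1) hm1
      have e2 := keyF ct2 hct2 l2 (exemptPats_subset_leafPats ct2.2 l2 hl2) hm2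
      subst e1; subst e2
      exact ihmut ⟨⟨l1, hl1, hm1⟩, ⟨l2, hl2, hm2⟩⟩
    · rintro l1 ⟨ct1, hct1, hl1⟩ l2 ⟨ct2, hct2, hl2⟩ hm1 hm2
      have e1 := keyF ct1 hct1 l1 (exemptPats_subset_leafPats ct1.2 l1 hl1) hm1
      have e2 := keyF ct2 hct2 l2 (exemptPats_subset_leafPats ct2.2 l2 hl2) hm2
      subst e1; subst e2
      exact ihuni l1 hl1 l2 hl2 hm1 hm2

theorem leaf_isPat {S : Sig} {f : ℕ} :
    ∀ T, WF S T → IsPat S f T.pat → ∀ l ∈ T.leafPats, IsPat S f l := by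
  refine DTree.ind _ ?_ ?_ ?_
  · intro q r _ hpat l hl
    simp only [DTree.pat] at hpat
    simp only [leafPats_rule, List.mem_singleton] at hl
    exact hl ▸ hpat
  · intro q _ hpat l hl
    simp only [DTree.pat] at hpat
    simp only [leafPats_exempt, List.mem_singleton] at hl
    exact hl ▸ hpat
  · intro p0 x cs ih hwf hpat l hl
    obtain ⟨⟨ty, hxv, hcty⟩, hcsnd, hfr, hwfs⟩ := wf_inv_branch hwf
    simp only [DTree.pat] at hpat
    simp only [leafPats_branch, List.mem_flatMap] at hl
    obtain ⟨ct, hct, hl⟩ := hl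
    obtain ⟨fresh, hfnd, hflen, hfty, hfdisj, hcpat⟩ := hfr ct hct
    have hcIsPat : IsPat S f ct.2.pat := by
      rw [hcpat]
      exact child_pat_isPat hpat hxv ((hcty ct.1).mp (List.mem_map_of_mem hct))
        hfnd hflen hfty hfdisj
    exact ih ct hct (hwfs ct hct) hcIsPat l hl

@[simp] theorem varsOf_opVars (g : ℕ) (xs : List (ℕ × ℕ)) :
    varsOf (Tm.op g (xs.map fun w => Tm.var w.1 w.2)) = xs := by
  simp only [varsOf_op, List.flatMap_map]
  induction xs with
  | nil => simp
  | cons a l ih => simp [ih]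

theorem substOf_eval {xs : List (ℕ × ℕ)} (hnd : (xs.map Prod.fst).Nodup)
    (us : List Tm) (hlen : xs.length = us.length) (g : ℕ) :
    applySubst (substOf (xs.map Prod.fst) us) (Tm.op g (xs.map fun v => Tm.var v.1 v.2)) =
      Tm.op g us := by
  simp only [applySubst_op, List.map_map]
  congr 1
  refine List.ext_getElem (by simpa using hlen) ?_
  intro i h1 h2
  simp only [List.getElem_map, Function.comp, applySubst_var, substOf]
  have hfi : (xs.map Prod.fst).findIdx? (· = xs[i].1) = some i := by
    have := findIdx?_nodup hnd (i := i) (by simpa using h1)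
    simpa using this
  simp only [hfi]
  simp [List.getD_eq_getElem?_getD, List.getElem?_eq_getElem h2]

theorem var_map_inj : Function.Injective (fun v : ℕ × ℕ => Tm.var v.1 v.2) := by
  rintro ⟨a1, a2⟩ ⟨b1, b2⟩ h
  simp only [Tm.var.injEq] at h
  simp [h.1, h.2]
/-- for an operation `f` whose standard rules form a minimal
definitional tree `T` with exempt nodes `N1, ..., Nn`, the left-hand sides of
the replacement rules `σi(f x1...xk = t)` are exhaustive and mutually
exclusive over exactly the ground `f`-rooted patterns not matched by any
standard rule: such a pattern is matched by exactly one replacement left-hand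
side, and no ground pattern matched by a standard rule is matched by a
replacement left-hand side. -/
theorem replacement_lhs_partition (S : Sig) (f : ℕ) (T : DTree)
    (hT : IsDTreeOf S f T) (hmin : Minimal T)
    (xs : List (ℕ × ℕ)) (t : Tm)
    (hroot : T.pat = .op f (xs.map fun v => Tm.var v.1 v.2))
    (ReplLhs : Tm → Prop)
    (hRepl : ∀ l, ReplLhs l ↔ ∃ us, Tm.op f us ∈ T.exemptPats ∧
        l = applySubst (substOf (xs.map Prod.fst) us)
              (Tm.op f (xs.map fun v => Tm.var v.1 v.2))) :
    ∀ p, IsGroundPat S f p →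
      ((¬ ∃ l ∈ T.rulePats, Matches l p) ↔ (∃! l, ReplLhs l ∧ Matches l p)) ∧
      ((∃ l ∈ T.rulePats, Matches l p) → ¬ ∃ l, ReplLhs l ∧ Matches l p) := by
  intro p hgp
  obtain ⟨hwf, xs', hnd', hlen', hty', hpat'⟩ := hT
  -- identify xs with xs'
  have hxs : xs = xs' := by
    rw [hroot] at hpat'
    simp only [Tm.op.injEq, true_and] at hpat'
    exact List.map_injective_iff.mpr var_map_inj hpat'
  subst hxs
  -- the root pattern is an f-rooted pattern
  have hrootPat : IsPat S f T.pat := by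
    rw [hroot]
    refine ⟨⟨_, rfl, ?_⟩, ?_, ?_⟩
    · intro u hu
      simp only [List.mem_map] at hu
      obtain ⟨w, -, rfl⟩ := hu
      exact CTerm.var _ _
    · rw [varsOf_opVars]; exact hnd'
    · refine HasTy.op _ _ (by simpa using hlen') ?_
      intro i hi
      simp only [List.length_map] at hi
      simp only [List.getElem_map]
      rw [← hty' i hi]
      exact HasTy.var _ _
  -- the root pattern matches p
  obtain ⟨⟨ps, hpeq, hctsp⟩, hndp, htyp⟩ := hgp.1
  have hpslen : xs.length = ps.length := by
    rw [hpeq] at htyp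
    obtain ⟨-, h2, -⟩ := hasTy_op_inv htyp
    rw [hlen', h2]
  have hrootM : Matches T.pat p := by
    rw [hroot, hpeq]
    exact ⟨_, substOf_eval hnd' ps hpslen f⟩
  obtain ⟨hex, hmut, hunis⟩ := uniq T hwf hrootPat p hgp hrootM
  -- ReplLhs l ↔ l ∈ T.exemptPats
  have hReplIff : ∀ l, ReplLhs l ↔ l ∈ T.exemptPats := by
    intro l
    rw [hRepl]
    constructor
    · rintro ⟨us, hus, rfl⟩
      have hlp := leaf_isPat T hwf hrootPat _ (exemptPats_subset_leafPats T _ hus)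
      have huslen : xs.length = us.length := by
        obtain ⟨-, -, hty⟩ := hlp
        obtain ⟨-, h2, -⟩ := hasTy_op_inv hty
        rw [hlen', h2]
      rw [substOf_eval hnd' us huslen f]
      exact hus
    · intro hl
      have hlp := leaf_isPat T hwf hrootPat _ (exemptPats_subset_leafPats T _ hl)
      obtain ⟨⟨us, rfl, -⟩, -, hty⟩ := hlp
      have huslen : xs.length = us.length := by
        obtain ⟨-, h2, -⟩ := hasTy_op_inv hty
        rw [hlen', h2]
      exact ⟨us, hl, (substOf_eval hnd' us huslen f).symm⟩
  constructor
  · constructor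
    · intro hnor
      rcases hex with hr | ⟨e, he, hme⟩
      · exact absurd hr hnor
      · refine ⟨e, ⟨(hReplIff e).mpr he, hme⟩, ?_⟩
        rintro l ⟨hrl, hml⟩
        exact hunis l ((hReplIff l).mp hrl) e he hml hme
    · rintro ⟨l, ⟨hrl, hml⟩, -⟩ ⟨r, hr, hmr⟩
      exact hmut ⟨⟨r, hr, hmr⟩, ⟨l, (hReplIff l).mp hrl, hml⟩⟩
  · rintro ⟨r, hr, hmr⟩ ⟨l, hrl, hml⟩
    exact hmut ⟨⟨r, hr, hmr⟩, ⟨l, (hReplIff l).mp hrl, hml⟩⟩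

end FLP
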